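/- Let S be a finite collection of substitutions on a finite alphabet A whose one-symbol transition matrix M_S (M_S(a,b) = 1 iff some word in S(a) := {σ(a) : σ ∈ S} starts with b) is primitive, and suppose there exists a sliding symbol a ∈ A, i.e., a^{p+1} ∈ S(a) for some p ≥ 1, every letter of A occurs as a first letter of some word in S(a), and S(A) ⊇ A^q for some q ≥ 1. Then S is primitive. -/

import Mathlib

def applySub {A S : Type*} (subst : S → A → List A) {N : ℕ}
    (s : Fin N → S) (b : Fin N → A) : List A :=
  (List.ofFn fun i => subst (s i) (b i)).flatten

def trunc {A : Type*} [Inhabited A] (N : ℕ) (w : List A) : Fin N → A :=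
  fun i => w.getD i.1 default

def chainT {A S : Type*} [Inhabited A] (subst : S → A → List A) {N : ℕ} :
    List (Fin N → S) → (Fin N → A) → (Fin N → A)
  | [], b => b
  | s :: rest, b => chainT subst rest (trunc N (applySub subst s b))

/-- Primitivity of a collection of substitutions. -/
def PrimitiveSub {A S : Type*} [Inhabited A] (subst : S → A → List A) : Prop :=
  ∀ N : ℕ, ∃ nN : ℕ, ∀ n ≥ nN, ∀ a b : Fin N → A,
    ∃ ss : List (Fin N → S), ss.length = n ∧ chainT subst ss b = a

set_option linter.unusedSectionVars false
set_option linter.unusedVariables false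
set_option linter.unreachableTactic false
set_option linter.unusedTactic false
set_option maxHeartbeats 1000000

section Aux
variable {A S : Type*} [Inhabited A] [Fintype A] [DecidableEq A] [Fintype S]
variable (subst : S → A → List A)

def Reach {N : ℕ} (n : ℕ) (b a : Fin N → A) : Prop :=
  ∃ ss : List (Fin N → S), ss.length = n ∧ chainT subst ss b = a

lemma chainT_append {N : ℕ} (ss ts : List (Fin N → S)) (b : Fin N → A) :
    chainT subst (ss ++ ts) b = chainT subst ts (chainT subst ss b) := by
  induction ss generalizing b with
  | nil => rfl
  | cons s rest ih => simp [chainT, ih]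

lemma Reach.trans {N : ℕ} {n m : ℕ} {a b c : Fin N → A}
    (h1 : Reach subst n a b) (h2 : Reach subst m b c) : Reach subst (n + m) a c := by
  obtain ⟨ss, hl, hc⟩ := h1
  obtain ⟨ts, hl', hc'⟩ := h2
  exact ⟨ss ++ ts, by simp [hl, hl'], by rw [chainT_append, hc, hc']⟩

lemma reach_refl {N : ℕ} (a : Fin N → A) : Reach subst 0 a a := ⟨[], rfl, rfl⟩

lemma reach_step {N : ℕ} (s : Fin N → S) (b : Fin N → A) :
    Reach subst 1 b (trunc N (applySub subst s b)) := ⟨[s], rfl, rfl⟩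

lemma reach_any {N : ℕ} [Nonempty S] (n : ℕ) (b : Fin N → A) :
    ∃ v, Reach subst n b v :=
  ⟨_, List.replicate n (fun _ => Classical.arbitrary S), List.length_replicate, rfl⟩

def Pref {N : ℕ} (w : List A) (v : Fin N → A) : Prop :=
  ∀ (i : ℕ) (h1 : i < w.length) (h2 : i < N), v ⟨i, h2⟩ = w[i]

lemma pref_nil {N : ℕ} (v : Fin N → A) : Pref [] v := by
  intro i h1 h2; simp at h1

lemma pref_eq {N : ℕ} (a v : Fin N → A) (h : Pref (List.ofFn a) v) : v = a := by
  funext i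
  have := h i.1 (by simp) i.2
  simpa using this

lemma word_decomp {N : ℕ} (s : Fin N → S) (v : Fin N → A) (m : ℕ) :
    applySub subst s v =
      ((List.ofFn fun i => subst (s i) (v i)).take m).flatten ++
      ((List.ofFn fun i => subst (s i) (v i)).drop m).flatten := by
  rw [applySub]
  conv_lhs => rw [← List.take_append_drop m (List.ofFn fun i => subst (s i) (v i))]
  rw [List.flatten_append]

lemma step_prefix {N : ℕ} (s : Fin N → S) (v : Fin N → A) (m : ℕ)
    (W : List A) (hW : ((List.ofFn fun i => subst (s i) (v i)).take m).flatten = W)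
    (j : ℕ) (hjW : j < W.length) (hjN : j < N) :
    trunc N (applySub subst s v) ⟨j, hjN⟩ = W[j] := by
  rw [trunc]
  simp only
  rw [word_decomp subst s v m, hW]
  rw [List.getD_eq_getElem _ _ (by simp; omega)]
  exact List.getElem_append_left hjW

lemma step_boundary {N : ℕ} (s : Fin N → S) (v : Fin N → A) (m : ℕ) (hm : m < N)
    (W : List A) (hW : ((List.ofFn fun i => subst (s i) (v i)).take m).flatten = W)
    (hWN : W.length < N)
    (y : A) (hy : (subst (s ⟨m, hm⟩) (v ⟨m, hm⟩)).head? = some y) :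
    trunc N (applySub subst s v) ⟨W.length, hWN⟩ = y := by
  rw [trunc]
  simp only
  rw [word_decomp subst s v m, hW]
  have hdrop : (List.ofFn fun i => subst (s i) (v i)).drop m
      = subst (s ⟨m, hm⟩) (v ⟨m, hm⟩) :: (List.ofFn fun i => subst (s i) (v i)).drop (m+1) := by
    rw [List.drop_eq_getElem_cons (by simpa using hm)]
    simp
  rw [hdrop]
  obtain ⟨t, ht⟩ := List.head?_eq_some_iff.mp (by simpa using hy)
  rw [ht]
  simp only [List.flatten_cons]
  rw [List.getD_eq_getElem _ _ (by simp)]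
  rw [List.getElem_append_right (le_refl W.length)]
  simp

def Edge (x y : A) : Prop := ∃ σ, (subst σ x).head? = some y

def HeadPath : ℕ → A → A → Prop
  | 0, x, y => x = y
  | (m+1), x, y => ∃ z, Edge subst x z ∧ HeadPath m z y

def SingleStep (c d : A) : Prop := ∃ σ, subst σ c = [d]

def SinglePath : ℕ → A → A → Prop
  | 0, c, d => c = d
  | (m+1), c, d => ∃ e, SingleStep subst c e ∧ SinglePath m e d

lemma steer {N : ℕ} [Nonempty S] (hN : 0 < N) :
    ∀ (m : ℕ) (b : Fin N → A) (z : A), HeadPath subst m (b ⟨0, hN⟩) z →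
    ∃ v, Reach subst m b v ∧ v ⟨0, hN⟩ = z := by
  intro m
  induction m with
  | zero => intro b z h; exact ⟨b, reach_refl subst b, h⟩
  | succ m ih =>
    intro b z h
    obtain ⟨y, ⟨σ, hσ⟩, hp⟩ := h
    set s : Fin N → S := fun _ => σ with hs
    set v1 := trunc N (applySub subst s b) with hv1
    have hb : v1 ⟨0, hN⟩ = y := by
      apply step_boundary subst s b 0 hN [] (by simp) (by simpa using hN) y
      simpa [hs] using hσ
    obtain ⟨v, hr, hz⟩ := ih v1 z (by rwa [hb])
    refine ⟨v, ?_, hz⟩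
    have := (reach_step subst s b).trans subst hr
    simpa [Nat.add_comm] using this

lemma singlePath_back (hq1 : ∀ d : A, ∃ c, SingleStep subst c d) :
    ∀ (m : ℕ) (d : A), ∃ c, SinglePath subst m c d := by
  intro m
  induction m with
  | zero => intro d; exact ⟨d, rfl⟩
  | succ m ih =>
    intro d
    obtain ⟨e, he⟩ := ih d
    obtain ⟨c, hc⟩ := hq1 e
    exact ⟨c, e, hc, he⟩

lemma chainWord (hq1 : ∀ d : A, ∃ c, SingleStep subst c d) (m : ℕ) :
    ∀ (w : List A), ∃ u : List A, u.length = w.length ∧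
      ∀ (i : ℕ) (h1 : i < u.length) (h2 : i < w.length),
        SinglePath subst m u[i] w[i] := by
  intro w
  induction w with
  | nil => exact ⟨[], rfl, by intro i h1 h2; simp at h2⟩
  | cons d t ih =>
    obtain ⟨u, hl, hc⟩ := ih
    obtain ⟨c, hcd⟩ := singlePath_back subst hq1 m d
    refine ⟨c :: u, by simp [hl], ?_⟩
    intro i h1 h2
    cases i with
    | zero => simpa using hcd
    | succ i => simpa using hc i (by simpa using h1) (by simpa using h2)

lemma flatten_map_singleton (L : List A) : (L.map fun x => ([x] : List A)).flatten = L := by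
  induction L <;> simp [*]

lemma flatten_singles {N : ℕ} (f : Fin N → List A) (L : List A) (hL : L.length ≤ N)
    (h : ∀ (i : ℕ) (hi : i < L.length), f ⟨i, lt_of_lt_of_le hi hL⟩ = [L[i]]) :
    ((List.ofFn f).take L.length).flatten = L := by
  have heq : (List.ofFn f).take L.length = L.map (fun x => [x]) := by
    apply List.ext_getElem
    · simp [hL]
    · intro i h1 h2
      simp only [List.getElem_take, List.getElem_ofFn, List.getElem_map]
      exact h i (by simpa using h2)
  rw [heq, flatten_map_singleton]


lemma absorb {N : ℕ} [Nonempty S] :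
    ∀ (m : ℕ) (v : Fin N → A) (u w' : List A) (x d : A)
      (hlen : u.length = w'.length) (hlt : w'.length < N)
      (hprefu : Pref u v)
      (hx : v ⟨w'.length, hlt⟩ = x)
      (hchain : ∀ (i : ℕ) (h1 : i < u.length) (h2 : i < w'.length),
          SinglePath subst m u[i] w'[i])
      (hhead : HeadPath subst m x d),
      ∃ v', Reach subst m v v' ∧ Pref w' v' ∧ v' ⟨w'.length, hlt⟩ = d := by
  intro m
  induction m with
  | zero =>
    intro v u w' x d hlen hlt hprefu hx hchain hhead
    refine ⟨v, reach_refl subst v, ?_, ?_⟩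
    · intro i h1 h2
      have h1u : i < u.length := by omega
      have := hchain i h1u h1
      have hv := hprefu i h1u h2
      rw [hv]
      exact this
    · rw [hx]; exact hhead
  | succ m ih =>
    intro v u w' x d hlen hlt hprefu hx hchain hhead
    obtain ⟨y, ⟨σx, hσx⟩, hy⟩ := hhead
    -- intermediate letters
    have hch : ∀ (i : ℕ) (hi : i < w'.length),
        ∃ e, SingleStep subst (u[i]'(by omega)) e ∧ SinglePath subst m e w'[i] := by
      intro i hi
      exact hchain i (by omega) hi
    classical
    choose e he1 he2 using hch
    -- the step function
    have hσsel : ∀ (i : ℕ) (hi : i < w'.length), ∃ σ, subst σ (u[i]'(by omega)) = [e i hi] :=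
      fun i hi => he1 i hi
    choose σf hσf using hσsel
    set u1 : List A := List.ofFn (fun j : Fin w'.length => e j.1 j.2) with hu1
    have hu1l : u1.length = w'.length := by simp [hu1]
    set s : Fin N → S := fun i =>
      if h : i.1 < w'.length then σf i.1 h
      else if i.1 = w'.length then σx
      else Classical.arbitrary S with hs
    set v1 := trunc N (applySub subst s v) with hv1
    -- blocks for i < w'.length are singletons
    have hblocks : ∀ (i : ℕ) (hi : i < u1.length),
        (fun i : Fin N => subst (s i) (v i)) ⟨i, lt_of_lt_of_le hi (by omega)⟩ = [u1[i]] := by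
      intro i hi
      have hi' : i < w'.length := by omega
      have hvi : v ⟨i, by omega⟩ = u[i]'(by omega) := hprefu i (by omega) (by omega)
      simp only [hs]
      rw [dif_pos hi']
      rw [hvi, hσf i hi']
      congr 1
      simp [hu1]
    have hflat : ((List.ofFn fun i : Fin N => subst (s i) (v i)).take u1.length).flatten = u1 :=
      flatten_singles _ u1 (by omega) hblocks
    have hpref1 : Pref u1 v1 := by
      intro i h1 h2
      exact step_prefix subst s v u1.length u1 hflat i h1 h2
    have hbound : v1 ⟨w'.length, hlt⟩ = y := by
      have hflat' : ((List.ofFn fun i : Fin N => subst (s i) (v i)).take w'.length).flatten = u1 := by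
        rw [← hu1l]; exact hflat
      have hhd : (subst (s ⟨w'.length, hlt⟩) (v ⟨w'.length, hlt⟩)).head? = some y := by
        have hsv : s ⟨w'.length, hlt⟩ = σx := by simp [hs]
        rw [hsv, hx, hσx]
      have h2 := step_boundary subst s v w'.length hlt u1 hflat' (by omega) y hhd
      have hidx : (⟨u1.length, by omega⟩ : Fin N) = ⟨w'.length, hlt⟩ := by
        ext; simpa using hu1l
      rwa [hidx] at h2
    obtain ⟨v', hr, hp, hb⟩ := ih v1 u1 w' y d (by omega) hlt hpref1 hbound
      (by
        intro i h1 h2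
        have : u1[i] = e i h2 := by simp [hu1]
        rw [this]
        exact he2 i h2) hy
    refine ⟨v', ?_, hp, hb⟩
    have := (reach_step subst s v).trans subst hr
    simpa [Nat.add_comm] using this


lemma buildPrefix {N : ℕ} [Nonempty S] {k : ℕ}
    (hha : ∀ s : ℕ, k ≤ s → ∀ x y : A, HeadPath subst s x y)
    (hq1 : ∀ d : A, ∃ c, SingleStep subst c d) :
    ∀ (ℓ : ℕ) (w : List A), w.length = ℓ → ℓ ≤ N → ∀ (n : ℕ), ℓ * (k+1) ≤ n →
      ∀ b : Fin N → A, ∃ v, Reach subst n b v ∧ Pref w v := by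
  intro ℓ
  induction ℓ with
  | zero =>
    intro w hw hN n hn b
    obtain ⟨v, hv⟩ := reach_any subst n b
    exact ⟨v, hv, by intro i h1 h2; omega⟩
  | succ ℓ ih =>
    intro w hw hN n hn b
    have hℓN : ℓ < N := by omega
    set w' : List A := w.take ℓ with hw'
    have hw'l : w'.length = ℓ := by simp [hw', hw]
    have hd : ℓ < w.length := by omega
    set d : A := w[ℓ] with hdd
    obtain ⟨u, hul, huc⟩ := chainWord subst hq1 (k+1) w'
    have hmul : ℓ * (k+1) + (k+1) = (ℓ+1) * (k+1) := by ring
    have hn' : ℓ * (k+1) ≤ n - (k+1) := by omega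
    obtain ⟨v1, hr1, hp1⟩ := ih u (by omega) (by omega) (n - (k+1)) hn' b
    set x : A := v1 ⟨ℓ, hℓN⟩ with hxx
    have hhd : HeadPath subst (k+1) x d := hha (k+1) (by omega) x d
    obtain ⟨v2, hr2, hp2, hb2⟩ := absorb subst (k+1) v1 u w' x d (by omega)
      (by rw [hw'l]; exact hℓN) hp1
      (by
        have : (⟨w'.length, by rw [hw'l]; exact hℓN⟩ : Fin N) = ⟨ℓ, hℓN⟩ := by
          ext; simpa using hw'l
        rw [this])
      (by
        intro i h1 h2
        exact huc i h1 h2) hhd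
    refine ⟨v2, ?_, ?_⟩
    · have := hr1.trans subst hr2
      have hn'' : n - (k+1) + (k+1) = n := by omega
      rwa [hn''] at this
    · intro i h1 h2
      rcases Nat.lt_or_ge i ℓ with hi | hi
      · have := hp2 i (by omega) h2
        rw [this]
        simp [hw']
      · have hieq : i = ℓ := by omega
        subst hieq
        have hidx : (⟨w'.length, by rw [hw'l]; exact hℓN⟩ : Fin N) = ⟨i, h2⟩ := by
          ext; simpa using hw'l
        rw [← hidx, hb2, hdd]

lemma q1_case {N : ℕ} [Nonempty S] {k : ℕ}
    (hha : ∀ s : ℕ, k ≤ s → ∀ x y : A, HeadPath subst s x y)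
    (hq1 : ∀ d : A, ∃ c, SingleStep subst c d) :
    ∀ (n : ℕ), N * (k+1) ≤ n → ∀ a b : Fin N → A, Reach subst n b a := by
  intro n hn a b
  obtain ⟨v, hr, hp⟩ := buildPrefix subst hha hq1 N (List.ofFn a) (by simp) (le_refl N) n hn b
  rwa [pref_eq a v hp] at hr


lemma chunk {q : ℕ} (hq0 : 0 < q)
    (hq : ∀ w : List A, w.length = q → ∃ σ c, subst σ c = w) :
    ∀ (n : ℕ) (w : List A), w.length = q * n →
      ∃ ps : List (S × A), ps.length = n ∧
        (ps.map fun p => subst p.1 p.2).flatten = w := by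
  intro n
  induction n with
  | zero =>
    intro w hw
    simp at hw
    exact ⟨[], rfl, by simp [hw]⟩
  | succ n ih =>
    intro w hw
    have hqle : q ≤ w.length := by
      rw [hw]; calc q = q * 1 := by ring
        _ ≤ q * (n+1) := Nat.mul_le_mul_left q (by omega)
    obtain ⟨σ, c, hc⟩ := hq (w.take q) (by simp [hqle])
    obtain ⟨ps, hl, hf⟩ := ih (w.drop q) (by simp [hw]; ring_nf; omega)
    refine ⟨(σ, c) :: ps, by simp [hl], ?_⟩
    simp only [List.map_cons, List.flatten_cons, hc, hf]
    exact List.take_append_drop q w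

lemma expand {N q : ℕ} [Nonempty S] (hq2 : 2 ≤ q)
    (hq : ∀ w : List A, w.length = q → ∃ σ c, subst σ c = w) :
    ∀ (T : ℕ) (w : List A), w.length ≤ q ^ T → w.length ≤ N →
      ∃ z : A, ∀ v : Fin N → A, (∀ h0 : 0 < N, v ⟨0, h0⟩ = z) →
        ∃ v', Reach subst T v v' ∧ Pref w v' := by
  intro T
  induction T with
  | zero =>
    intro w hT hN
    match w, hT with
    | [], _ => exact ⟨default, fun v _ => ⟨v, reach_refl subst v, pref_nil v⟩⟩
    | [z], _ =>
      refine ⟨z, fun v hv => ⟨v, reach_refl subst v, ?_⟩⟩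
      intro i h1 h2
      simp at h1
      subst h1
      simpa using hv h2
    | (z :: y :: t), hT => simp [pow_zero] at hT
  | succ T ih =>
    intro w hT hN
    rcases Nat.eq_zero_or_pos w.length with hL0 | hL1
    · refine ⟨default, fun v _ => ?_⟩
      obtain ⟨v', hv'⟩ := reach_any subst (T+1) v
      exact ⟨v', hv', by intro i h1 h2; omega⟩
    · set L := w.length with hLL
      set dd := (L + q - 1) / q with hdd
      have hdm := Nat.div_add_mod (L + q - 1) q
      rw [← hdd] at hdm
      have hmod : (L + q - 1) % q < q := Nat.mod_lt _ (by omega)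
      -- key facts, with X := q * dd as a linear atom
      have hX1 : q * dd ≤ L + q - 1 := by omega
      have hX2 : L ≤ q * dd := by omega
      have hdq : dd ≤ q ^ T := by
        by_contra hcon
        push_neg at hcon
        have h1 : q * (q ^ T + 1) ≤ q * dd := Nat.mul_le_mul_left q (by omega)
        rw [mul_add, mul_one] at h1
        have h2 : q * q ^ T = q ^ (T+1) := (pow_succ' q T).symm
        have hT' : L ≤ q ^ (T+1) := hT
        omega
      have hdL : dd ≤ L := by
        by_contra hcon
        push_neg at hcon
        have h1 : q * (L + 1) ≤ q * dd := Nat.mul_le_mul_left q (by omega)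
        have h2 : 2 * L ≤ q * L := Nat.mul_le_mul_right L hq2
        have h3 : q * (L + 1) = q * L + q := by ring
        omega
      set w' : List A := w ++ List.replicate (q * dd - L) default with hww
      have hw'l : w'.length = q * dd := by
        simp [hww, ← hLL]
        omega
      obtain ⟨ps, hpl, hpf⟩ := chunk subst (by omega) hq dd w' hw'l
      set u : List A := ps.map Prod.snd with hu
      have hul : u.length = dd := by simp [hu, hpl]
      obtain ⟨z, hz⟩ := ih u (by omega) (by omega)
      refine ⟨z, fun v hv => ?_⟩
      obtain ⟨v1, hr1, hp1⟩ := hz v hv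
      classical
      set s : Fin N → S := fun i =>
        if h : i.1 < dd then (ps[i.1]'(by omega)).1 else Classical.arbitrary S with hs
      have hflat : ((List.ofFn fun i : Fin N => subst (s i) (v1 i)).take dd).flatten = w' := by
        have heq : (List.ofFn fun i : Fin N => subst (s i) (v1 i)).take dd
            = ps.map (fun p => subst p.1 p.2) := by
          apply List.ext_getElem
          · simp [hpl]
            omega
          · intro i h1 h2
            have hi : i < dd := by simp [hpl] at h2; omega
            simp only [List.getElem_take, List.getElem_ofFn, List.getElem_map]
            have hsv : s ⟨i, by omega⟩ = (ps[i]'(by omega)).1 := by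
              simp [hs, hi]
            have hv1 : v1 ⟨i, by omega⟩ = (ps[i]'(by omega)).2 := by
              have := hp1 i (by omega) (by omega)
              rw [this]
              simp [hu]
            rw [hsv, hv1]
        rw [heq, hpf]
      set v2 := trunc N (applySub subst s v1) with hv2
      refine ⟨v2, ?_, ?_⟩
      · have := hr1.trans subst (reach_step subst s v1)
        simpa using this
      · intro i h1 h2
        have hiw' : i < w'.length := by
          rw [hw'l]; omega
        have := step_prefix subst s v1 dd w' hflat i hiw' h2
        rw [hv2, this]
        simp only [hww]
        first
        | exact List.getElem_append_left h1
        | exact (List.getElem_append_left h1).symm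


variable (MS : Matrix A A ℝ)

variable (hMS : ∀ a b : A, MS a b = if ∃ σ, (subst σ a).head? = some b then 1 else 0)

include hMS

lemma MS_entry_nonneg : ∀ a b : A, 0 ≤ MS a b := by
  intro a b; rw [hMS]; split <;> norm_num

lemma MS_pow_nonneg : ∀ (j : ℕ) (a b : A), 0 ≤ (MS ^ j) a b := by
  intro j
  induction j with
  | zero => intro a b; simp [Matrix.one_apply]; split <;> norm_num
  | succ j ih =>
    intro a b
    rw [pow_succ, Matrix.mul_apply]
    exact Finset.sum_nonneg fun c _ => mul_nonneg (ih a c) (MS_entry_nonneg subst MS hMS c b)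

lemma MS_pos_edge {a b : A} (h : 0 < MS a b) : Edge subst a b := by
  rw [hMS] at h
  by_cases hc : ∃ σ, (subst σ a).head? = some b
  · exact hc
  · rw [if_neg hc] at h; norm_num at h

lemma MS_pos_headPath : ∀ (j : ℕ) (a b : A), 0 < (MS ^ j) a b → HeadPath subst j a b := by
  intro j
  induction j with
  | zero =>
    intro a b h
    rw [pow_zero] at h
    by_cases hab : a = b
    · exact hab
    · rw [Matrix.one_apply_ne hab] at h; norm_num at h
  | succ j ih =>
    intro a b h
    rw [pow_succ', Matrix.mul_apply] at h
    have hex : ∃ c, 0 < MS a c * (MS ^ j) c b := by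
      by_contra hno
      push_neg at hno
      have : (∑ c, MS a c * (MS ^ j) c b) ≤ 0 := Finset.sum_nonpos fun c _ => hno c
      linarith
    obtain ⟨c, hc⟩ := hex
    have h1 : 0 < MS a c := by
      rcases (MS_entry_nonneg subst MS hMS a c).lt_or_eq with h' | h'
      · exact h'
      · rw [← h'] at hc; simp at hc
    have h2 : 0 < (MS ^ j) c b := by
      rcases (MS_pow_nonneg subst MS hMS j c b).lt_or_eq with h' | h'
      · exact h'
      · rw [← h'] at hc; simp at hc
    exact ⟨c, MS_pos_edge subst MS hMS h1, ih c b h2⟩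

omit hMS

lemma headPath_last_edge : ∀ (m : ℕ) (x y : A), HeadPath subst (m+1) x y → ∃ c, Edge subst c y := by
  intro m
  induction m with
  | zero => rintro x y ⟨z, he, hz⟩; exact ⟨x, hz ▸ he⟩
  | succ m ih => rintro x y ⟨z, _, hz⟩; exact ih z y hz

include hMS

lemma MS_pow_pos_all {k : ℕ} (hk1 : 1 ≤ k) (hMSprim : ∀ a b : A, 0 < (MS ^ k) a b) :
    ∀ (s : ℕ), k ≤ s → ∀ a b : A, 0 < (MS ^ s) a b := by
  have hinto : ∀ b : A, ∃ c, Edge subst c b := by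
    intro b
    have := MS_pos_headPath subst MS hMS k b b (hMSprim b b)
    obtain ⟨k', rfl⟩ : ∃ k', k = k' + 1 := ⟨k - 1, by omega⟩
    exact headPath_last_edge subst k' b b this
  intro s hs
  obtain ⟨t, rfl⟩ : ∃ t, s = k + t := ⟨s - k, by omega⟩
  induction t with
  | zero => simpa using hMSprim
  | succ t ih =>
    intro a b
    have ihh := ih (by omega)
    obtain ⟨c, hc⟩ := hinto b
    have hcb : MS c b = 1 := by
      rw [hMS]; exact if_pos hc
    rw [show k + (t+1) = (k+t) + 1 by omega, pow_succ, Matrix.mul_apply]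
    have hterm : 0 < (MS ^ (k+t)) a c * MS c b := by
      rw [hcb, mul_one]; exact ihh a c
    have : (MS ^ (k+t)) a c * MS c b ≤ ∑ x, (MS ^ (k+t)) a x * MS x b := by
      apply Finset.single_le_sum (f := fun x => (MS ^ (k+t)) a x * MS x b)
      · intro x _
        exact mul_nonneg (MS_pow_nonneg subst MS hMS _ a x) (MS_entry_nonneg subst MS hMS x b)
      · exact Finset.mem_univ c
    linarith

lemma headPath_all {k : ℕ} (hk1 : 1 ≤ k) (hMSprim : ∀ a b : A, 0 < (MS ^ k) a b) :
    ∀ (s : ℕ), k ≤ s → ∀ a b : A, HeadPath subst s a b := by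
  intro s hs a b
  exact MS_pos_headPath subst MS hMS s a b (MS_pow_pos_all subst MS hMS hk1 hMSprim s hs a b)


omit hMS

lemma q2_case {N q : ℕ} [Nonempty S] {k : ℕ}
    (hha : ∀ s : ℕ, k ≤ s → ∀ x y : A, HeadPath subst s x y)
    (hq2 : 2 ≤ q) (hq : ∀ w : List A, w.length = q → ∃ σ c, subst σ c = w)
    (hN : 0 < N) :
    ∀ n : ℕ, k + N ≤ n → ∀ a b : Fin N → A, Reach subst n b a := by
  intro n hn a b
  have hlen : (List.ofFn a).length ≤ q ^ N := by
    simp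
    exact le_of_lt (Nat.lt_pow_self (n := N) (a := q) (by omega))
  have hlen2 : (List.ofFn a).length ≤ N := by simp
  obtain ⟨z, hz⟩ := expand subst hq2 hq N (List.ofFn a) hlen hlen2
  have hpath : HeadPath subst (n - N) (b ⟨0, hN⟩) z := hha (n - N) (by omega) _ z
  obtain ⟨v, hr, hv0⟩ := steer subst hN (n - N) b z hpath
  obtain ⟨v', hr', hp⟩ := hz v (fun h0 => hv0)
  have hfin := hr.trans subst hr'
  rw [show n - N + N = n by omega] at hfin
  rwa [pref_eq a v' hp] at hfin

end Aux

/-- if the one-symbol transition matrix M_S (M_S(a,b) = 1 iff some word of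
S(a) starts with b) of a finite collection of substitutions is primitive, and there is a
sliding symbol a (i.e. a^{p+1} ∈ S(a) for some p ≥ 1, every letter occurs as first letter
of some word in S(a), and S(A) contains every word of some length q ≥ 1), then S is
primitive. -/
theorem stmt18 {A S : Type*} [Fintype A] [DecidableEq A] [Inhabited A]
    [Fintype S] [Nonempty S]
    (subst : S → A → List A) (hne : ∀ σ a, subst σ a ≠ [])
    (MS : Matrix A A ℝ)
    (hMS : ∀ a b : A, MS a b = if ∃ σ, (subst σ a).head? = some b then 1 else 0)
    (hMSprim : ∃ k : ℕ, ∀ a b : A, 0 < (MS ^ k) a b)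
    (hslide : ∃ (a : A) (p : ℕ), 1 ≤ p ∧
      (∃ σ, subst σ a = List.replicate (p + 1) a) ∧
      (∀ b : A, ∃ σ, (subst σ a).head? = some b) ∧
      (∃ q : ℕ, 1 ≤ q ∧ ∀ w : List A, w.length = q → ∃ σ c, subst σ c = w)) :
    PrimitiveSub subst := by
  obtain ⟨k, hk⟩ := hMSprim
  obtain ⟨a0, p, hp1, hσ0, hheads, q, hq1, hq⟩ := hslide
  intro N
  rcases Nat.eq_zero_or_pos k with hk0 | hkpos
  · -- degenerate: A is a subsingleton
    subst hk0
    have hsub : ∀ x y : A, x = y := by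
      intro x y
      have hpos := hk x y
      rw [pow_zero] at hpos
      by_contra hne'
      rw [Matrix.one_apply_ne hne'] at hpos
      norm_num at hpos
    refine ⟨0, fun n _ a b => ?_⟩
    refine ⟨List.replicate n (fun _ => Classical.arbitrary S), by simp, ?_⟩
    funext i
    exact hsub _ _
  · have hha := headPath_all subst MS hMS hkpos hk
    rcases Nat.lt_or_ge q 2 with hq2 | hq2
    · have hqeq : q = 1 := by omega
      subst hqeq
      have hq1' : ∀ d : A, ∃ c, SingleStep subst c d := by
        intro d
        obtain ⟨σ, c, hc⟩ := hq [d] (by simp)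
        exact ⟨c, σ, hc⟩
      refine ⟨N * (k+1), fun n hn a b => ?_⟩
      obtain ⟨ss, h1, h2⟩ := q1_case subst hha hq1' n hn a b
      exact ⟨ss, h1, h2⟩
    · rcases Nat.eq_zero_or_pos N with hN0 | hN
      · subst hN0
        refine ⟨0, fun n _ a b => ?_⟩
        refine ⟨List.replicate n (fun _ => Classical.arbitrary S), by simp, ?_⟩
        funext i
        exact i.elim0
      · refine ⟨k + N, fun n hn a b => ?_⟩
        obtain ⟨ss, h1, h2⟩ := q2_case subst hha hq2 hq hN n hn a b
        exact ⟨ss, h1, h2⟩
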